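/- If a class L of languages over Σ has finite elasticity, then the class of shuffle closures { L^⊛ : L ∈ L } has finite elasticity. -/

import Mathlib

/-- A set system has finite elasticity if it has no infinite elasticity. -/
def FiniteElasticity {X : Type*} (𝓛 : Set (Set X)) : Prop :=
  ¬ ∃ (t : ℕ → X) (L : ℕ → Set X),
      (∀ i, L i ∈ 𝓛) ∧ (∀ i j, j ≤ i → t j ∈ L i) ∧ (∀ i, t (i + 1) ∉ L i)

/-- `IsShuffle u v w` : the word `w` is an interleaving of the words `u` and `v`. -/
inductive IsShuffle {σ : Type*} : List σ → List σ → List σ → Prop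
  | nil : IsShuffle [] [] []
  | left {a : σ} {u v w : List σ} : IsShuffle u v w → IsShuffle (a :: u) v (a :: w)
  | right {a : σ} {u v w : List σ} : IsShuffle u v w → IsShuffle u (a :: v) (a :: w)

/-- The shuffle product of two languages. -/
def shuffleProd {σ : Type*} (L M : Set (List σ)) : Set (List σ) :=
  {w | ∃ u ∈ L, ∃ v ∈ M, IsShuffle u v w}

/-- Iterated shuffle: `shufflePow L n` is the shuffle of `n + 1` copies of `L`. -/
def shufflePow {σ : Type*} (L : Set (List σ)) : ℕ → Set (List σ)
  | 0 => L
  | n + 1 => shuffleProd L (shufflePow L n)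

/-- The shuffle closure `L^⊛ = L ∪ (L◇L) ∪ (L◇L◇L) ∪ ⋯ ∪ {ε}`. -/
def shuffleClosure {σ : Type*} (L : Set (List σ)) : Set (List σ) :=
  (⋃ n : ℕ, shufflePow L n) ∪ {([] : List σ)}

namespace Stmt12Aux

variable {σ : Type*}

/-- `w` is a shuffle of the list of words `l`. -/
def ShuffleOf : List (List σ) → List σ → Prop
  | [], w => w = []
  | u :: l, w => ∃ v, IsShuffle u v w ∧ ShuffleOf l v

lemma _root_.IsShuffle.nil_right {u : List σ} : IsShuffle u [] u := by
  induction u with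
  | nil => exact IsShuffle.nil
  | cons a u ih => exact IsShuffle.left ih

lemma _root_.IsShuffle.eq_of_nil_left {v w : List σ} (h : IsShuffle [] v w) : v = w := by
  generalize hu : ([] : List σ) = u at h
  induction h with
  | nil => rfl
  | left h ih => exact absurd hu (by simp)
  | right h ih => rw [ih hu]

lemma _root_.IsShuffle.eq_of_nil_right {u w : List σ} (h : IsShuffle u [] w) : u = w := by
  generalize hv : ([] : List σ) = v at h
  induction h with
  | nil => rfl
  | left h ih => rw [ih hv]
  | right h ih => exact absurd hv (by simp)

lemma _root_.IsShuffle.length_eq {u v w : List σ} (h : IsShuffle u v w) :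
    u.length + v.length = w.length := by
  induction h with
  | nil => rfl
  | left h ih => simp only [List.length_cons]; omega
  | right h ih => simp only [List.length_cons]; omega

lemma _root_.IsShuffle.sublist_left {u v w : List σ} (h : IsShuffle u v w) : u.Sublist w := by
  induction h with
  | nil => exact List.Sublist.refl _
  | left h ih => exact ih.cons₂ _
  | right h ih => exact ih.cons _

lemma ShuffleOf.length_eq {l : List (List σ)} {w : List σ} (h : ShuffleOf l w) :
    (l.map List.length).sum = w.length := by
  induction l generalizing w with
  | nil => simp [ShuffleOf] at h; simp [h]
  | cons u l ih =>
      obtain ⟨v, hsh, hrest⟩ := h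
      simp only [List.map_cons, List.sum_cons]
      rw [ih hrest, hsh.length_eq]

lemma mem_shufflePow_iff {L : Set (List σ)} {n : ℕ} {w : List σ} :
    w ∈ shufflePow L n ↔ ∃ l : List (List σ),
      l.length = n + 1 ∧ (∀ u ∈ l, u ∈ L) ∧ ShuffleOf l w := by
  induction n generalizing w with
  | zero =>
      constructor
      · intro hw
        exact ⟨[w], rfl, by simpa [shufflePow] using hw, ⟨[], IsShuffle.nil_right, rfl⟩⟩
      · rintro ⟨l, hlen, hmem, hsh⟩
        match l, hlen with
        | [u], _ =>
            obtain ⟨v, hsh, hv⟩ := hsh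
            simp only [ShuffleOf] at hv
            subst hv
            rw [← hsh.eq_of_nil_right]
            exact hmem u (by simp)
  | succ n ih =>
      constructor
      · rintro ⟨u, hu, v, hv, hsh⟩
        obtain ⟨l, hlen, hmem, hsh'⟩ := ih.mp hv
        exact ⟨u :: l, by simp [hlen], by
          intro x hx; rcases List.mem_cons.mp hx with rfl | hx
          exacts [hu, hmem x hx], ⟨v, hsh, hsh'⟩⟩
      · rintro ⟨l, hlen, hmem, hsh⟩
        match l with
        | u :: l =>
            obtain ⟨v, hsh, hrest⟩ := hsh
            exact ⟨u, hmem u (by simp), v,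
              ih.mpr ⟨l, by simpa using hlen, fun x hx => hmem x (by simp [hx]), hrest⟩, hsh⟩

lemma mem_closure_of_shuffleOf {L : Set (List σ)} {l : List (List σ)} {w : List σ}
    (hmem : ∀ u ∈ l, u ∈ L) (hsh : ShuffleOf l w) : w ∈ shuffleClosure L := by
  match l with
  | [] =>
      simp only [ShuffleOf] at hsh
      exact Or.inr (by simp [hsh])
  | u :: l =>
      refine Or.inl (Set.mem_iUnion.mpr ⟨l.length, ?_⟩)
      exact mem_shufflePow_iff.mpr ⟨u :: l, by simp, hmem, hsh⟩

lemma shuffleOf_filter {l : List (List σ)} {w : List σ} (h : ShuffleOf l w) :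
    ShuffleOf (l.filter (fun u => !u.isEmpty)) w := by
  induction l generalizing w with
  | nil => simpa using h
  | cons u l ih =>
      obtain ⟨v, hsh, hrest⟩ := h
      by_cases hu : u = []
      · subst hu
        rw [hsh.eq_of_nil_left] at hrest
        simpa using ih hrest
      · rw [List.filter_cons_of_pos (by simpa using hu)]
        exact ⟨v, hsh, ih hrest⟩

lemma exists_decomp {L : Set (List σ)} {w : List σ} (h : w ∈ shuffleClosure L) :
    ∃ l : List (List σ), (∀ u ∈ l, u ∈ L ∧ u ≠ []) ∧ ShuffleOf l w := by
  rcases h with h | h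
  · obtain ⟨n, hn⟩ := Set.mem_iUnion.mp h
    obtain ⟨l, _, hmem, hsh⟩ := mem_shufflePow_iff.mp hn
    refine ⟨l.filter (fun u => !u.isEmpty), ?_, shuffleOf_filter hsh⟩
    intro u hu
    refine ⟨hmem u (List.mem_of_mem_filter hu), ?_⟩
    have := List.of_mem_filter hu
    simpa using this
  · exact ⟨[], by simp, by simpa [ShuffleOf] using h⟩

lemma finite_lists {α : Type*} {s : Set α} (hs : s.Finite) (n : ℕ) :
    {l : List α | l.length ≤ n ∧ ∀ x ∈ l, x ∈ s}.Finite := by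
  have := hs.to_subtype
  have h1 : {l : List ↥s | l.length ≤ n}.Finite := List.finite_length_le _ n
  refine (h1.image (List.map Subtype.val)).subset ?_
  rintro l ⟨hl, hmem⟩
  refine ⟨l.pmap (fun x hx => (⟨x, hx⟩ : ↥s)) hmem, ?_, ?_⟩
  · simpa using hl
  · simp [List.map_pmap]

lemma finite_decomps [Fintype σ] (w : List σ) :
    {l : List (List σ) | ShuffleOf l w ∧ ∀ u ∈ l, u ≠ []}.Finite := by
  refine (finite_lists (List.finite_length_le σ w.length) w.length).subset ?_
  rintro l ⟨hsh, hne⟩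
  have hsum := hsh.length_eq
  constructor
  · -- l.length ≤ w.length : each entry has length ≥ 1
    have : l.length ≤ (l.map List.length).sum := by
      calc l.length = (l.map (fun _ => 1)).sum := by simp
      _ ≤ (l.map List.length).sum := by
          apply List.sum_le_sum
          intro u hu
          have : u ≠ [] := hne u (by simpa using hu)
          exact Nat.one_le_iff_ne_zero.mpr (by simpa using this)
    omega
  · intro u hu
    have : u.length ≤ (l.map List.length).sum :=
      List.single_le_sum (by simp) _ (List.mem_map_of_mem (f := List.length) hu)
    simp only [Set.mem_setOf_eq]
    omega

end Stmt12Aux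

open Stmt12Aux in
theorem stmt12 {σ : Type*} [Fintype σ] (𝓛 : Set (Set (List σ)))
    (h : FiniteElasticity 𝓛) :
    FiniteElasticity {M : Set (List σ) | ∃ L ∈ 𝓛, M = shuffleClosure L} := by
  rintro ⟨t, M, hM, hmem, hnot⟩
  choose L hL hML using hM
  apply h
  classical
  set U : Ultrafilter ℕ := Filter.hyperfilter ℕ with hU
  -- upward-closed sets of indices are in U
  have hIci : ∀ j : ℕ, {i | j ≤ i} ∈ U := by
    intro j
    exact Filter.mem_hyperfilter_of_finite_compl (by
      apply Set.Finite.subset (Set.finite_Iio j)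
      intro i hi
      simpa using hi)
  -- for each j, find a decomposition of `t j` valid on a U-large set of indices
  have hΦ : ∀ j : ℕ, ∃ S : List (List σ), ShuffleOf S (t j) ∧ (∀ u ∈ S, u ≠ []) ∧
      {i | ∀ u ∈ S, u ∈ L i} ∈ U := by
    intro j
    have hcov : {i | j ≤ i} ⊆ ⋃ S ∈ {l : List (List σ) | ShuffleOf l (t j) ∧ ∀ u ∈ l, u ≠ []},
        {i | ∀ u ∈ S, u ∈ L i} := by
      intro i hi
      have : t j ∈ shuffleClosure (L i) := by
        rw [← hML i]; exact hmem i j hi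
      obtain ⟨l, hl, hsh⟩ := exists_decomp this
      exact Set.mem_biUnion ⟨hsh, fun u hu => (hl u hu).2⟩ (fun u hu => (hl u hu).1)
    have hbig : (⋃ S ∈ {l : List (List σ) | ShuffleOf l (t j) ∧ ∀ u ∈ l, u ≠ []},
        {i | ∀ u ∈ S, u ∈ L i}) ∈ U := Filter.mem_of_superset (hIci j) hcov
    obtain ⟨S, hS, hSU⟩ :=
      (Ultrafilter.finite_biUnion_mem_iff (finite_decomps (t j))).mp hbig
    exact ⟨S, hS.1, hS.2, hSU⟩
  choose S hSsh hSne hSU using hΦ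
  -- the decreasing chain of U-large index sets
  set C : ℕ → Set ℕ := fun j => {i | j ≤ i} ∩ ⋂ j' ∈ Finset.range (j + 1), {i | ∀ u ∈ S j', u ∈ L i}
    with hC
  have hCU : ∀ j, C j ∈ U := by
    intro j
    exact Filter.inter_mem (hIci j) (Filter.biInter_finset_mem _ |>.mpr fun j' _ => hSU j')
  have hCne : ∀ j, (C j).Nonempty := fun j => Ultrafilter.nonempty_of_mem (hCU j)
  -- the recursive index sequence
  set J : ℕ → ℕ := fun k => Nat.rec 1 (fun _ jk => (hCne jk).choose + 1) k with hJ
  set m : ℕ → ℕ := fun k => (hCne (J k)).choose with hm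
  have hJsucc : ∀ k, J (k + 1) = m k + 1 := fun k => rfl
  have hmmem : ∀ k, m k ∈ C (J k) := fun k => (hCne (J k)).choose_spec
  have hmge : ∀ k, J k ≤ m k := fun k => (hmmem k).1
  have hJ1 : ∀ k, 1 ≤ J k := by
    intro k
    induction k with
    | zero => exact le_refl 1
    | succ k ih => rw [hJsucc]; omega
  have hJmono : ∀ {k k'}, k' ≤ k → J k' ≤ J k := by
    intro k k' hk
    induction k with
    | zero => simp_all
    | succ k ih =>
        rcases Nat.lt_or_ge k' (k + 1) with hlt | hge
        · have := ih (by omega)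
          have := hmge k
          rw [hJsucc]; omega
        · have : k' = k + 1 := by omega
          simp [this]
  -- membership facts from C
  have hCmem : ∀ k j', j' ≤ J k → ∀ u ∈ S j', u ∈ L (m k) := by
    intro k j' hj' u hu
    have h2 := (hmmem k).2
    simp only [Set.mem_iInter, Finset.mem_range] at h2
    exact h2 j' (by omega) u hu
  -- the violating words
  have hviol : ∀ k, ∃ u, u ∈ S (J (k + 1)) ∧ u ∉ L (m k) := by
    intro k
    by_contra hcon
    push_neg at hcon
    have : t (J (k + 1)) ∈ shuffleClosure (L (m k)) :=
      mem_closure_of_shuffleOf (fun u hu => hcon u hu) (hSsh (J (k + 1)))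
    rw [hJsucc] at this
    exact hnot (m k) (by rw [hML (m k)]; exact this)
  -- the first word : any element of S 1
  have hS1 : S 1 ≠ [] := by
    intro hnil
    have := hSsh 1
    rw [hnil] at this
    have ht1 : t 1 = [] := this
    have : t 1 ∈ M 0 := by
      rw [hML 0, ht1]; exact Or.inr rfl
    exact hnot 0 this
  obtain ⟨u0, hu0⟩ := List.exists_mem_of_ne_nil _ hS1
  -- assemble the elasticity witness for 𝓛
  refine ⟨fun k => Nat.rec u0 (fun k _ => (hviol k).choose) k, fun k => L (m k),
    fun k => hL (m k), ?_, ?_⟩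
  · intro i k hk
    match k with
    | 0 => exact hCmem i 1 (hJ1 i) u0 hu0
    | k + 1 =>
        have hw : (hviol k).choose ∈ S (J (k + 1)) := (hviol k).choose_spec.1
        exact hCmem i (J (k + 1)) (hJmono hk) _ hw
  · intro i
    exact (hviol i).choose_spec.2
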